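/- Strict dominance version: under the hypotheses of the dominance lemma with the additional assumption v0_ŵ > v0_w, the inequality between access values is strict: for every finite N' with T ⊆ N' ⊆ N, A_ŵ(N') < A_w(N'). -/

import Mathlib

theorem access_strict_dominance {α : Type*} [DecidableEq α]
    (v0w v1w v0h v1h : ℝ) (aw ah : α → ℝ)
    (hv0w : 0 < v0w) (hv1w : 0 < v1w) (hv0h : 0 < v0h) (hv1h : 0 < v1h)
    (haw : ∀ n, 0 < aw n) (hah : ∀ n, 0 < ah n)
    (N T : Finset α) (hTN : T ⊆ N)
    (h0 : v0w < v0h)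
    (h1 : v1h + ∑ n ∈ T, ah n ≤ v1w + ∑ n ∈ T, aw n)
    (h2 : ∀ n ∈ N \ T, ah n ≤ aw n) :
    ∀ N' : Finset α, T ⊆ N' → N' ⊆ N →
      (v1h + ∑ n ∈ N', ah n) / (v0h + v1h + ∑ n ∈ N', ah n) <
        (v1w + ∑ n ∈ N', aw n) / (v0w + v1w + ∑ n ∈ N', aw n) := by
  intro N' hTN' hN'N
  have hsplit : ∀ f : α → ℝ, ∑ n ∈ N', f n = ∑ n ∈ T, f n + ∑ n ∈ N' \ T, f n := by
    intro f
    rw [← Finset.sum_union (Finset.disjoint_sdiff), Finset.union_sdiff_of_subset hTN']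
  have hrest : ∑ n ∈ N' \ T, ah n ≤ ∑ n ∈ N' \ T, aw n :=
    Finset.sum_le_sum fun n hn => h2 n (Finset.sdiff_subset_sdiff hN'N le_rfl hn)
  have hSle : v1h + ∑ n ∈ N', ah n ≤ v1w + ∑ n ∈ N', aw n := by
    rw [hsplit ah, hsplit aw]; linarith
  set Sh := v1h + ∑ n ∈ N', ah n with hSh
  set Sw := v1w + ∑ n ∈ N', aw n with hSw
  have hShpos : 0 < Sh := by
    have : 0 ≤ ∑ n ∈ N', ah n := Finset.sum_nonneg fun n _ => (hah n).le
    positivity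
  have hSwpos : 0 < Sw := lt_of_lt_of_le hShpos hSle
  have step1 : Sh / (v0h + Sh) < Sh / (v0w + Sh) :=
    div_lt_div_of_pos_left hShpos (by linarith) (by linarith)
  have step2 : Sh / (v0w + Sh) ≤ Sw / (v0w + Sw) := by
    rw [div_le_div_iff₀ (by linarith) (by linarith)]
    nlinarith
  calc Sh / (v0h + v1h + ∑ n ∈ N', ah n) = Sh / (v0h + Sh) := by rw [hSh]; ring
    _ < Sh / (v0w + Sh) := step1
    _ ≤ Sw / (v0w + Sw) := step2
    _ = Sw / (v0w + v1w + ∑ n ∈ N', aw n) := by rw [hSw]; ring
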